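/- Let V ∈ ℝ^{p×k} have rank k, let J ∈ ℝ^{t×p}, let 0 ≤ ε ≤ 1/2, and let S : ℝ^p → ℝ^s be a linear map such that for each row Jᵢ of J, S is an ε-isometry on the subspace col(V) + span{Jᵢᵀ}. Let U ∈ ℝ^{p×k} have orthonormal columns with col(U) = col(V), and let U_S ∈ ℝ^{s×k} have orthonormal columns with col(U_S) = col(S V), where S V is the matrix whose columns are S applied to the columns of V, and let S Jᵀ denote the t-column matrix whose i-th column is S(Jᵢᵀ). Then | ‖U_Sᵀ (S Jᵀ)‖_F² − ‖Uᵀ Jᵀ‖_F² | ≤ 27ε · ‖J‖_F²; equivalently, the sketched uncertainty score ‖J‖_F² − ‖U_Sᵀ (S Jᵀ)‖_F² equals the exact score ‖J‖_F² − ‖Uᵀ Jᵀ‖_F² up to additive error 27ε·‖J‖_F². -/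

import Mathlib

open Matrix RealInnerProductSpace

set_option maxHeartbeats 1000000

open Matrix RealInnerProductSpace

section SLUHelpers

variable {E F : Type*} [NormedAddCommGroup E] [InnerProductSpace ℝ E]
  [NormedAddCommGroup F] [InnerProductSpace ℝ F]

lemma slu_polar (S : E →ₗ[ℝ] F) (ε : ℝ) (hε0 : 0 ≤ ε) (hε1 : ε ≤ 1/2)
    (T : Submodule ℝ E)
    (hS : ∀ z ∈ T, (1 - ε) * ‖z‖ ≤ ‖S z‖ ∧ ‖S z‖ ≤ (1 + ε) * ‖z‖)
    (w v : E) (hw : w ∈ T) (hv : v ∈ T) (hwv : ⟪w, v⟫ = 0) :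
    ⟪S w, S v⟫ ≤ 2 * ε * (‖w‖ * ‖v‖) := by
  rcases eq_or_ne w 0 with rfl | hw0
  · simp
  rcases eq_or_ne v 0 with rfl | hv0
  · simp
  have hnw : 0 < ‖w‖ := norm_pos_iff.2 hw0
  have hnv : 0 < ‖v‖ := norm_pos_iff.2 hv0
  set a : E := ‖v‖ • w with ha
  set b : E := ‖w‖ • v with hb
  have hab : ⟪a, b⟫ = 0 := by
    simp [ha, hb, inner_smul_left, inner_smul_right, hwv]
  have hnab : ‖a + b‖ ^ 2 = 2 * (‖w‖ ^ 2 * ‖v‖ ^ 2) := by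
    rw [norm_add_sq_real, hab]
    simp only [ha, hb, norm_smul, Real.norm_eq_abs, abs_of_pos hnw, abs_of_pos hnv]
    ring
  have hnab' : ‖a - b‖ ^ 2 = 2 * (‖w‖ ^ 2 * ‖v‖ ^ 2) := by
    rw [norm_sub_sq_real, hab]
    simp only [ha, hb, norm_smul, Real.norm_eq_abs, abs_of_pos hnw, abs_of_pos hnv]
    ring
  have haT : a + b ∈ T := T.add_mem (T.smul_mem _ hw) (T.smul_mem _ hv)
  have hsT : a - b ∈ T := T.sub_mem (T.smul_mem _ hw) (T.smul_mem _ hv)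
  have h1 := (hS _ haT).2
  have h2 := (hS _ hsT).1
  have hSab : ⟪S a, S b⟫ = (‖S (a+b)‖ ^ 2 - ‖S (a-b)‖ ^ 2) / 4 := by
    rw [map_add, map_sub, norm_add_sq_real, norm_sub_sq_real]; ring
  have key : ⟪S a, S b⟫ ≤ 2 * ε * (‖w‖ ^ 2 * ‖v‖ ^ 2) := by
    rw [hSab]
    have e1 : ‖S (a+b)‖ ^ 2 ≤ (1+ε)^2 * ‖a+b‖^2 := by
      nlinarith [norm_nonneg (a+b), norm_nonneg (S (a+b))]
    have e2 : (1-ε)^2 * ‖a-b‖^2 ≤ ‖S (a-b)‖ ^ 2 := by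
      have h1e : (0:ℝ) ≤ 1 - ε := by linarith
      nlinarith [norm_nonneg (a-b), mul_nonneg h1e (norm_nonneg (a-b))]
    rw [hnab] at e1; rw [hnab'] at e2
    nlinarith
  have hSa : ⟪S a, S b⟫ = (‖w‖ * ‖v‖) * ⟪S w, S v⟫ := by
    rw [ha, hb, S.map_smul, S.map_smul, inner_smul_left, inner_smul_right]
    simp; ring
  rw [hSa] at key
  have hpos : 0 < ‖w‖ * ‖v‖ := mul_pos hnw hnv
  have key2 : (‖w‖*‖v‖) * ⟪S w, S v⟫ ≤ (‖w‖*‖v‖) * (2 * ε * (‖w‖ * ‖v‖)) := by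
    nlinarith [key]
  exact le_of_mul_le_mul_left key2 hpos

lemma slu_key (S : E →ₗ[ℝ] F) (ε : ℝ) (hε0 : 0 ≤ ε) (hε1 : ε ≤ 1/2)
    (T : Submodule ℝ E)
    (hS : ∀ z ∈ T, (1 - ε) * ‖z‖ ≤ ‖S z‖ ∧ ‖S z‖ ≤ (1 + ε) * ‖z‖)
    (u v w : E) (hu : u ∈ T) (hv : v ∈ T) (hw : w ∈ T)
    (huv : ⟪u, v⟫ = 0) (hwv : ⟪w, v⟫ = 0)
    (hq : ‖S w‖ ^ 2 = ⟪S w, S v⟫) :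
    |‖S u + S w‖ ^ 2 - ‖u‖ ^ 2| ≤ 27 * ε * (‖u‖ ^ 2 + ‖v‖ ^ 2) := by
  have hpol := slu_polar S ε hε0 hε1 T hS w v hw hv hwv
  have hwlo := (hS w hw).1
  have hulo := (hS u hu).1
  have huhi := (hS u hu).2
  have hSw : ‖S w‖ ≤ 4 * ε * ‖v‖ := by
    have hww : ‖w‖ ≤ 2 * ‖S w‖ := by nlinarith [norm_nonneg w]
    have h2 : ‖S w‖ ^ 2 ≤ 4 * ε * ‖S w‖ * ‖v‖ := by
      calc ‖S w‖ ^ 2 = ⟪S w, S v⟫ := hq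
        _ ≤ 2 * ε * (‖w‖ * ‖v‖) := hpol
        _ ≤ 2 * ε * ((2 * ‖S w‖) * ‖v‖) := by
            apply mul_le_mul_of_nonneg_left _ (by positivity)
            exact mul_le_mul_of_nonneg_right hww (norm_nonneg v)
        _ = 4 * ε * ‖S w‖ * ‖v‖ := by ring
    rcases eq_or_lt_of_le (norm_nonneg (S w)) with h0 | h0
    · rw [← h0]; positivity
    · nlinarith
  have hcs := abs_real_inner_le_norm (S u) (S w)
  have hexp : ‖S u + S w‖ ^ 2 = ‖S u‖ ^ 2 + 2 * ⟪S u, S w⟫ + ‖S w‖ ^ 2 :=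
    norm_add_sq_real _ _
  have h1 : |⟪S u, S w⟫| ≤ ((1+ε) * ‖u‖) * (4 * ε * ‖v‖) := by
    refine hcs.trans ?_
    exact mul_le_mul huhi hSw (norm_nonneg _) (by positivity)
  rw [abs_le] at h1 ⊢
  obtain ⟨h1l, h1r⟩ := h1
  have hsu2 : ‖S u‖^2 ≤ (1+ε)^2 * ‖u‖^2 := by
    nlinarith [norm_nonneg (S u), norm_nonneg u]
  have hsu2' : (1-ε)^2 * ‖u‖^2 ≤ ‖S u‖^2 := by
    have h1e : (0:ℝ) ≤ 1 - ε := by linarith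
    nlinarith [norm_nonneg u, mul_nonneg h1e (norm_nonneg u)]
  have hsw2 : ‖S w‖^2 ≤ 16 * ε^2 * ‖v‖^2 := by
    nlinarith [norm_nonneg (S w), mul_nonneg (mul_nonneg hε0 hε0) (sq_nonneg ‖v‖)]
  have hnuv : ε * (‖u‖ * ‖v‖) ≤ ε * ((‖u‖^2 + ‖v‖^2)/2) := by
    apply mul_le_mul_of_nonneg_left _ hε0
    nlinarith [sq_nonneg (‖u‖ - ‖v‖)]
  have hε2 : ε^2 ≤ ε/2 := by nlinarith
  have hεu : ε^2 * ‖u‖^2 ≤ (ε/2) * ‖u‖^2 :=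
    mul_le_mul_of_nonneg_right hε2 (sq_nonneg _)
  have hεv : ε^2 * ‖v‖^2 ≤ (ε/2) * ‖v‖^2 :=
    mul_le_mul_of_nonneg_right hε2 (sq_nonneg _)
  have hεuv : ε^2 * (‖u‖*‖v‖) ≤ (ε/2) * (‖u‖*‖v‖) :=
    mul_le_mul_of_nonneg_right hε2 (mul_nonneg (norm_nonneg _) (norm_nonneg _))
  constructor <;> rw [hexp] <;>
    linarith [sq_nonneg (‖S w‖), mul_nonneg hε0 (sq_nonneg ‖u‖), mul_nonneg hε0 (sq_nonneg ‖v‖),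
      mul_nonneg hε0 (mul_nonneg (norm_nonneg u) (norm_nonneg v)),
      mul_nonneg (sq_nonneg ε) (sq_nonneg ‖u‖), mul_nonneg (sq_nonneg ε) (sq_nonneg ‖v‖),
      mul_nonneg (sq_nonneg ε) (mul_nonneg (norm_nonneg u) (norm_nonneg v))]

end SLUHelpers

lemma slu_inner_eq_dot {n : ℕ} (f g : Fin n → ℝ) :
    ⟪(WithLp.equiv 2 (Fin n → ℝ)).symm f, (WithLp.equiv 2 (Fin n → ℝ)).symm g⟫ = f ⬝ᵥ g := by
  simp [PiLp.inner_apply, dotProduct, RCLike.inner_apply]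
  exact Finset.sum_congr rfl fun _ _ => mul_comm _ _

lemma slu_equiv_symm_add {n : ℕ} (f g : Fin n → ℝ) :
    (WithLp.equiv 2 (Fin n → ℝ)).symm (f + g)
      = (WithLp.equiv 2 (Fin n → ℝ)).symm f + (WithLp.equiv 2 (Fin n → ℝ)).symm g := rfl

lemma slu_orth_dot {n m : ℕ} (M : Matrix (Fin n) (Fin m) ℝ) (h : Mᵀ * M = 1)
    (b c : Fin m → ℝ) : (M *ᵥ b) ⬝ᵥ (M *ᵥ c) = b ⬝ᵥ c := by
  rw [dotProduct_mulVec, ← mulVec_transpose, mulVec_mulVec, h, one_mulVec]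

lemma slu_mulVec_sum {m n : ℕ} (M : Matrix (Fin m) (Fin n) ℝ) (b : Fin n → ℝ) :
    M *ᵥ b = ∑ j, b j • fun r => M r j := by
  ext r; simp [mulVec, dotProduct, Finset.sum_apply, mul_comm]

lemma slu_comp {p s k : ℕ} (V : Matrix (Fin p) (Fin k) ℝ)
    (S : EuclideanSpace ℝ (Fin p) →ₗ[ℝ] EuclideanSpace ℝ (Fin s))
    (SV : Matrix (Fin s) (Fin k) ℝ)
    (hSV : SV = Matrix.of fun a j =>
      S ((EuclideanSpace.equiv (Fin p) ℝ).symm fun r => V r j) a) :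
    Matrix.toEuclideanLin SV = S ∘ₗ Matrix.toEuclideanLin V := by
  refine LinearMap.ext fun b => ?_
  set b' : Fin k → ℝ := (WithLp.equiv 2 (Fin k → ℝ)) b with hb'
  rw [LinearMap.comp_apply, Matrix.toEuclideanLin_apply, Matrix.toEuclideanLin_apply]
  calc (WithLp.equiv 2 (Fin s → ℝ)).symm (SV *ᵥ b')
      = (WithLp.linearEquiv 2 ℝ (Fin s → ℝ)).symm (SV *ᵥ b') := rfl
    _ = ∑ j, b' j • (WithLp.linearEquiv 2 ℝ (Fin s → ℝ)).symm (fun r => SV r j) := by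
        rw [slu_mulVec_sum, map_sum]
        simp only [LinearEquiv.map_smul]
    _ = ∑ j, b' j • S ((WithLp.equiv 2 (Fin p → ℝ)).symm fun r => V r j) := by
        refine Finset.sum_congr rfl fun j _ => ?_
        congr 1
        rw [hSV]
        rfl
    _ = S ((WithLp.equiv 2 (Fin p → ℝ)).symm (V *ᵥ b')) := by
        rw [show (WithLp.equiv 2 (Fin p → ℝ)).symm (V *ᵥ b')
            = (WithLp.linearEquiv 2 ℝ (Fin p → ℝ)).symm (V *ᵥ b') from rfl,
          slu_mulVec_sum, map_sum, map_sum]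
        simp only [LinearEquiv.map_smul, LinearMap.map_smul]
        rfl


/-- **Lemma 3 (Orthogonalizing the sketch, for matrix queries), matrix form.**
With `V` of rank `k`, `U` an orthonormal basis of `col(V)`, `U_S` an orthonormal
basis of `col(SV)`, and `S` an `ε`-isometry on `col(V) + span{Jᵢᵀ}` for each row
`Jᵢ` of `J` (where `0 ≤ ε ≤ 1/2`), the squared Frobenius norms satisfy
`| ‖U_Sᵀ (S Jᵀ)‖_F² − ‖Uᵀ Jᵀ‖_F² | ≤ 27ε·‖J‖_F²`; equivalently the sketched
uncertainty score `‖J‖_F² − ‖U_Sᵀ (S Jᵀ)‖_F²` equals the exact score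
`‖J‖_F² − ‖Uᵀ Jᵀ‖_F²` up to additive error `27ε·‖J‖_F²`. -/
theorem sketched_uncertainty_score_close
    {p s k t : ℕ} (V : Matrix (Fin p) (Fin k) ℝ) (hV : V.rank = k)
    (J : Matrix (Fin t) (Fin p) ℝ)
    (ε : ℝ) (hε0 : 0 ≤ ε) (hε1 : ε ≤ 1 / 2)
    (S : EuclideanSpace ℝ (Fin p) →ₗ[ℝ] EuclideanSpace ℝ (Fin s))
    (hS : ∀ i : Fin t, ∀ w ∈ LinearMap.range (Matrix.toEuclideanLin V)
        ⊔ Submodule.span ℝ {(EuclideanSpace.equiv (Fin p) ℝ).symm fun j => J i j},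
      (1 - ε) * ‖w‖ ≤ ‖S w‖ ∧ ‖S w‖ ≤ (1 + ε) * ‖w‖)
    (U : Matrix (Fin p) (Fin k) ℝ) (hUorth : Uᵀ * U = 1)
    (hUcol : LinearMap.range (Matrix.toEuclideanLin U)
      = LinearMap.range (Matrix.toEuclideanLin V))
    (SV : Matrix (Fin s) (Fin k) ℝ)
    (hSV : SV = Matrix.of fun a j =>
      S ((EuclideanSpace.equiv (Fin p) ℝ).symm fun r => V r j) a)
    (US : Matrix (Fin s) (Fin k) ℝ) (hUSorth : USᵀ * US = 1)
    (hUScol : LinearMap.range (Matrix.toEuclideanLin US)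
      = LinearMap.range (Matrix.toEuclideanLin SV))
    (SJt : Matrix (Fin s) (Fin t) ℝ)
    (hSJt : SJt = Matrix.of fun a i =>
      S ((EuclideanSpace.equiv (Fin p) ℝ).symm fun j => J i j) a) :
    abs ((∑ a, ∑ i, (USᵀ * SJt) a i ^ 2) - ∑ a, ∑ i, (Uᵀ * Jᵀ) a i ^ 2)
      ≤ 27 * ε * ∑ i, ∑ j, J i j ^ 2 := by
  have hrangeSV : LinearMap.range (Matrix.toEuclideanLin SV)
      = (LinearMap.range (Matrix.toEuclideanLin V)).map S := by
    rw [slu_comp V S SV hSV, LinearMap.range_comp]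
  have hrow : ∀ i : Fin t,
      |(∑ a, (USᵀ * SJt) a i ^ 2) - ∑ a, (Uᵀ * Jᵀ) a i ^ 2| ≤ 27 * ε * ∑ j, J i j ^ 2 := by
    intro i
    set x : Fin p → ℝ := J i with hx
    set xE : EuclideanSpace ℝ (Fin p) :=
      (EuclideanSpace.equiv (Fin p) ℝ).symm (fun j => J i j) with hxE
    set av : Fin k → ℝ := Uᵀ *ᵥ x with hav
    set uf : Fin p → ℝ := U *ᵥ av with huf
    set uE : EuclideanSpace ℝ (Fin p) := (WithLp.equiv 2 (Fin p → ℝ)).symm uf with huE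
    set vf : Fin p → ℝ := x - uf with hvf
    set vE : EuclideanSpace ℝ (Fin p) := (WithLp.equiv 2 (Fin p → ℝ)).symm vf with hvE
    have hxEx : xE = (WithLp.equiv 2 (Fin p → ℝ)).symm x := rfl
    have hUv : Uᵀ *ᵥ vf = 0 := by
      rw [hvf, mulVec_sub, huf, mulVec_mulVec, hUorth, one_mulVec, ← hav, sub_self]
    have hexact : ∑ a, (Uᵀ * Jᵀ) a i ^ 2 = av ⬝ᵥ av := by
      simp only [dotProduct, Matrix.mul_apply, Matrix.transpose_apply, hav, mulVec,
        dotProduct, hx, sq]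
    have hnormu : ‖uE‖ ^ 2 = av ⬝ᵥ av := by
      rw [← real_inner_self_eq_norm_sq, huE, slu_inner_eq_dot, huf,
        slu_orth_dot U hUorth]
    have hvperp : ∀ z, z ∈ LinearMap.range (Matrix.toEuclideanLin U) → ⟪vE, z⟫ = 0 := by
      rintro z ⟨b, rfl⟩
      rw [Matrix.toEuclideanLin_apply, hvE]
      refine (slu_inner_eq_dot vf (U *ᵥ b.ofLp)).trans ?_
      rw [dotProduct_mulVec, ← mulVec_transpose, hUv, zero_dotProduct]
    have huW : uE ∈ LinearMap.range (Matrix.toEuclideanLin U) := by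
      refine ⟨(WithLp.equiv 2 (Fin k → ℝ)).symm av, ?_⟩
      rw [Matrix.toEuclideanLin_apply]; rfl
    have huv : ⟪uE, vE⟫ = 0 := by rw [real_inner_comm]; exact hvperp _ huW
    have hxuv : xE = uE + vE := by
      rw [hxEx, huE, hvE, ← slu_equiv_symm_add]
      congr 1
      rw [hvf]; ring
    -- sketched side
    set cv : Fin k → ℝ := USᵀ *ᵥ ((WithLp.equiv 2 (Fin s → ℝ)) (S xE)) with hcv
    have hsketch : ∑ a, (USᵀ * SJt) a i ^ 2 = cv ⬝ᵥ cv := by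
      have hcol : ∀ b, SJt b i = (WithLp.equiv 2 (Fin s → ℝ)) (S xE) b := by
        intro b; rw [hSJt]; rfl
      simp only [dotProduct, Matrix.mul_apply, Matrix.transpose_apply, hcv, mulVec,
        dotProduct, sq]
      refine Finset.sum_congr rfl fun a _ => ?_
      have he : (∑ b, US b a * SJt b i) = ∑ b, US b a * (WithLp.equiv 2 (Fin s → ℝ)) (S xE) b :=
        Finset.sum_congr rfl fun b _ => by rw [hcol b]
      rw [he]
    set qf : Fin s → ℝ := US *ᵥ cv with hqf
    set qE : EuclideanSpace ℝ (Fin s) := (WithLp.equiv 2 (Fin s → ℝ)).symm qf with hqE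
    have hnormq : ‖qE‖ ^ 2 = cv ⬝ᵥ cv := by
      rw [← real_inner_self_eq_norm_sq, hqE, slu_inner_eq_dot, hqf, slu_orth_dot US hUSorth]
    have hy : (WithLp.equiv 2 (Fin s → ℝ)) (S xE)
        = (WithLp.equiv 2 (Fin s → ℝ)) (S uE) + (WithLp.equiv 2 (Fin s → ℝ)) (S vE) := by
      rw [hxuv, map_add]; rfl
    set dv : Fin k → ℝ := USᵀ *ᵥ ((WithLp.equiv 2 (Fin s → ℝ)) (S vE)) with hdv
    set q2f : Fin s → ℝ := US *ᵥ dv with hq2f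
    set q2E : EuclideanSpace ℝ (Fin s) := (WithLp.equiv 2 (Fin s → ℝ)).symm q2f with hq2E
    have hSuUS : S uE ∈ LinearMap.range (Matrix.toEuclideanLin US) := by
      rw [hUScol, hrangeSV]
      exact Submodule.mem_map_of_mem (hUcol ▸ huW)
    have hid : ∀ z ∈ LinearMap.range (Matrix.toEuclideanLin US),
        (WithLp.equiv 2 (Fin s → ℝ)).symm
          (US *ᵥ (USᵀ *ᵥ (WithLp.equiv 2 (Fin s → ℝ)) z)) = z := by
      rintro z ⟨b, rfl⟩
      rw [Matrix.toEuclideanLin_apply]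
      have hmm : USᵀ *ᵥ (US *ᵥ (WithLp.equiv 2 (Fin k → ℝ)) b)
          = (WithLp.equiv 2 (Fin k → ℝ)) b := by
        rw [mulVec_mulVec, hUSorth, one_mulVec]
      exact congrArg (fun y => (WithLp.equiv 2 (Fin s → ℝ)).symm (US *ᵥ y)) hmm
    have hqdec : qE = S uE + q2E := by
      have h1 : qf = US *ᵥ (USᵀ *ᵥ (WithLp.equiv 2 (Fin s → ℝ)) (S uE)) + q2f := by
        rw [hqf, hcv, hy, mulVec_add, mulVec_add, hq2f, hdv]
      rw [hqE, h1, slu_equiv_symm_add, hid _ hSuUS]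
    have hq2mem : q2E ∈ LinearMap.range (Matrix.toEuclideanLin US) := by
      refine ⟨(WithLp.equiv 2 (Fin k → ℝ)).symm dv, ?_⟩
      rw [Matrix.toEuclideanLin_apply]; rfl
    obtain ⟨w1, hw1W, hw1⟩ :
        ∃ w1 ∈ LinearMap.range (Matrix.toEuclideanLin V), S w1 = q2E := by
      have h := hq2mem
      rw [hUScol, hrangeSV] at h
      exact h
    have hq : ‖S w1‖ ^ 2 = ⟪S w1, S vE⟫ := by
      rw [hw1]
      have h1 : ‖q2E‖ ^ 2 = dv ⬝ᵥ dv := by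
        rw [← real_inner_self_eq_norm_sq, hq2E, slu_inner_eq_dot, hq2f,
          slu_orth_dot US hUSorth]
      have h2 : ⟪q2E, S vE⟫ = dv ⬝ᵥ dv := by
        rw [show S vE = (WithLp.equiv 2 (Fin s → ℝ)).symm
            ((WithLp.equiv 2 (Fin s → ℝ)) (S vE)) from (Equiv.symm_apply_apply _ _).symm,
          hq2E, slu_inner_eq_dot, hq2f, dotProduct_comm, dotProduct_mulVec,
          ← mulVec_transpose, ← hdv]
      rw [h1, h2]
    set T : Submodule ℝ (EuclideanSpace ℝ (Fin p)) :=
      LinearMap.range (Matrix.toEuclideanLin V) ⊔ Submodule.span ℝ {xE} with hT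
    have hST : ∀ z ∈ T, (1 - ε) * ‖z‖ ≤ ‖S z‖ ∧ ‖S z‖ ≤ (1 + ε) * ‖z‖ := hS i
    have huT : uE ∈ T := Submodule.mem_sup_left (hUcol ▸ huW)
    have hxT : xE ∈ T := Submodule.mem_sup_right (Submodule.mem_span_singleton_self xE)
    have hvT : vE ∈ T := by
      have hveq : vE = xE - uE := by rw [hxuv]; abel
      rw [hveq]; exact Submodule.sub_mem T hxT huT
    have hw1T : w1 ∈ T := Submodule.mem_sup_left hw1W
    have hwv : ⟪w1, vE⟫ = 0 := by
      rw [real_inner_comm]; exact hvperp _ (hUcol.symm ▸ hw1W)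
    have hkey := slu_key S ε hε0 hε1 T hST uE vE w1 huT hvT hw1T huv hwv hq
    have hxnorm : ‖uE‖^2 + ‖vE‖^2 = ∑ j, J i j ^ 2 := by
      have h1 : ‖xE‖^2 = ‖uE‖^2 + ‖vE‖^2 := by
        rw [hxuv, norm_add_sq_real, huv]; ring
      rw [← h1, ← real_inner_self_eq_norm_sq, hxEx, slu_inner_eq_dot]
      simp [dotProduct, hx, sq]
    have hqeq : ∑ a, (USᵀ * SJt) a i ^ 2 = ‖S uE + S w1‖^2 := by
      rw [hsketch, ← hnormq, hqdec, hw1]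
    rw [hqeq, hexact, ← hnormu, ← hxnorm]
    exact hkey
  have h1 : ∑ a, ∑ i, (USᵀ * SJt) a i ^ 2 = ∑ i, ∑ a, (USᵀ * SJt) a i ^ 2 :=
    Finset.sum_comm
  have h2 : ∑ a, ∑ i, (Uᵀ * Jᵀ) a i ^ 2 = ∑ i, ∑ a, (Uᵀ * Jᵀ) a i ^ 2 :=
    Finset.sum_comm
  rw [h1, h2, ← Finset.sum_sub_distrib]
  refine (Finset.abs_sum_le_sum_abs _ _).trans ?_
  rw [show (27 * ε * ∑ i, ∑ j, J i j ^ 2) = ∑ i, 27 * ε * ∑ j, J i j ^ 2 by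
    rw [Finset.mul_sum]]
  exact Finset.sum_le_sum fun i _ => hrow i
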